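/- Let 𝒦 be a convex geometry on a finite set E with set of rooted circuits 𝒞, and let T ⊆ E. Then the family {T ∩ X : X ∈ 𝒦} is a convex geometry on the ground set T, and its set of rooted circuits is exactly the trace 𝒞:T = {(X, e) ∈ 𝒞 : X ⊆ T and e ∈ T}. -/

import Mathlib

open Set

variable {α : Type*}

/-- A closure system on a ground set `E`: a family of subsets of `E` containing `E`
and closed under pairwise intersection. -/
def IsClosureSystem (E : Set α) (K : Set (Set α)) : Prop :=
  (∀ A ∈ K, A ⊆ E) ∧ E ∈ K ∧ ∀ A ∈ K, ∀ B ∈ K, A ∩ B ∈ K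

/-- The closure operator `τ(X) = ⋂ {A ∈ K : X ⊆ A}`. -/
def closureOp (K : Set (Set α)) (X : Set α) : Set α :=
  ⋂₀ {A | A ∈ K ∧ X ⊆ A}

/-- The extreme operator `ex(X) = {x ∈ X : x ∉ τ(X \ {x})}`. -/
def extremeOp (K : Set (Set α)) (X : Set α) : Set α :=
  {x | x ∈ X ∧ x ∉ closureOp K (X \ {x})}

/-- A rooted circuit `(X, e)` of a closure system `K` on ground set `E`:
`e ∉ X` and `X` is minimal under inclusion with `e ∈ τ(X)`. -/
def IsRootedCircuit (E : Set α) (K : Set (Set α)) (X : Set α) (e : α) : Prop :=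
  X ⊆ E ∧ e ∈ E ∧ e ∉ X ∧ e ∈ closureOp K X ∧
    ∀ Y ⊆ X, e ∈ closureOp K Y → Y = X

/-- A convex geometry: a closure system in which every nonempty closed set has a
nonempty extreme set. -/
def IsConvexGeometry (E : Set α) (K : Set (Set α)) : Prop :=
  IsClosureSystem E K ∧ ∀ X ∈ K, X.Nonempty → (extremeOp K X).Nonempty

/-- A convex geometry has stem size 2 if every rooted circuit has stem of size 2. -/
def StemSize2 (E : Set α) (K : Set (Set α)) : Prop :=
  ∀ X e, IsRootedCircuit E K X e → X.ncard = 2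

lemma subset_closureOp (K : Set (Set α)) (X : Set α) : X ⊆ closureOp K X := by
  intro x hx
  simp only [closureOp, mem_sInter, mem_setOf_eq]
  exact fun A hA => hA.2 hx

lemma closureOp_mono (K : Set (Set α)) {X Y : Set α} (h : X ⊆ Y) :
    closureOp K X ⊆ closureOp K Y := by
  intro x hx
  simp only [closureOp, mem_sInter, mem_setOf_eq] at *
  exact fun A hA => hx A ⟨hA.1, h.trans hA.2⟩

lemma sInter_mem_cs {E : Set α} {K : Set (Set α)} (hK : IsClosureSystem E K)
    {S : Set (Set α)} (hS : S.Finite) : S.Nonempty → S ⊆ K → ⋂₀ S ∈ K := by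
  refine Set.Finite.induction_on (motive := fun S _ => S.Nonempty → S ⊆ K → ⋂₀ S ∈ K) S hS ?_ ?_
  · exact fun h _ => absurd rfl h.ne_empty
  · intro a s ha hs ih _ hsub
    rcases s.eq_empty_or_nonempty with rfl | hne
    · simpa using hsub (mem_insert a ∅)
    · rw [sInter_insert]
      exact hK.2.2 a (hsub (mem_insert a s)) _
        (ih hne (fun z hz => hsub (mem_insert_of_mem a hz)))

lemma closureOp_mem {E : Set α} {K : Set (Set α)} (hE : E.Finite)
    (hK : IsClosureSystem E K) {Y : Set α} (hY : Y ⊆ E) : closureOp K Y ∈ K := by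
  have hfin : {A | A ∈ K ∧ Y ⊆ A}.Finite :=
    hE.finite_subsets.subset (fun A hA => hK.1 A hA.1)
  exact sInter_mem_cs hK hfin ⟨E, hK.2.1, hY⟩ (fun A hA => hA.1)

lemma extreme_nonempty {E : Set α} {K : Set (Set α)} (hE : E.Finite)
    (hK : IsClosureSystem E K)
    (hcg : ∀ X ∈ K, X.Nonempty → (extremeOp K X).Nonempty)
    {Y : Set α} (hY : Y ⊆ E) (hne : Y.Nonempty) :
    (extremeOp K Y).Nonempty := by
  have hC : closureOp K Y ∈ K := closureOp_mem hE hK hY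
  have hYC : Y ⊆ closureOp K Y := subset_closureOp K Y
  obtain ⟨x, hx1, hx2⟩ := hcg _ hC (hne.mono hYC)
  have hxY : x ∈ Y := by
    by_contra hxy
    apply hx2
    have hsub : Y ⊆ closureOp K Y \ {x} := fun z hz =>
      ⟨hYC hz, by simp only [mem_singleton_iff]; rintro rfl; exact hxy hz⟩
    exact closureOp_mono K hsub hx1
  exact ⟨x, hxY, fun h => hx2 (closureOp_mono K (diff_subset_diff_left hYC) h)⟩

lemma closureOp_trace {E T : Set α} {K : Set (Set α)} (hK : IsClosureSystem E K)
    (hT : T ⊆ E) {Z : Set α} (hZ : Z ⊆ T) :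
    closureOp {Y | ∃ X ∈ K, Y = T ∩ X} Z = T ∩ closureOp K Z := by
  ext x
  simp only [closureOp, mem_sInter, mem_setOf_eq, mem_inter_iff]
  constructor
  · intro hx
    have hxT : x ∈ T ∩ E := hx _ ⟨⟨E, hK.2.1, rfl⟩, subset_inter hZ (hZ.trans hT)⟩
    exact ⟨hxT.1, fun A hA => (hx _ ⟨⟨A, hA.1, rfl⟩, subset_inter hZ hA.2⟩).2⟩
  · rintro ⟨hxT, hxc⟩ A ⟨⟨X, hXK, rfl⟩, hZA⟩
    exact ⟨hxT, hxc _ ⟨hXK, fun z hz => (hZA hz).2⟩⟩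

theorem stmt2 (E T : Set α) (hE : E.Finite) (K : Set (Set α))
    (hK : IsConvexGeometry E K) (hT : T ⊆ E) :
    IsConvexGeometry T {Y | ∃ X ∈ K, Y = T ∩ X} ∧
      {p : Set α × α | IsRootedCircuit T {Y | ∃ X ∈ K, Y = T ∩ X} p.1 p.2} =
        {p : Set α × α | IsRootedCircuit E K p.1 p.2 ∧ p.1 ⊆ T ∧ p.2 ∈ T} := by
  obtain ⟨hcs, hcg⟩ := hK
  have hKsub : ∀ A ∈ {Y | ∃ X ∈ K, Y = T ∩ X}, A ⊆ T := by
    rintro A ⟨X, hX, rfl⟩; exact inter_subset_left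
  have hTmem : T ∈ {Y | ∃ X ∈ K, Y = T ∩ X} :=
    ⟨E, hcs.2.1, (inter_eq_left.mpr hT).symm⟩
  have hcs' : IsClosureSystem T {Y | ∃ X ∈ K, Y = T ∩ X} := by
    refine ⟨hKsub, hTmem, ?_⟩
    rintro A ⟨X, hX, rfl⟩ B ⟨Y, hY, rfl⟩
    exact ⟨X ∩ Y, hcs.2.2 X hX Y hY, by ext z; simp; tauto⟩
  constructor
  · refine ⟨hcs', ?_⟩
    intro Y hY hne
    have hYT : Y ⊆ T := hKsub Y hY
    obtain ⟨x, hx1, hx2⟩ := extreme_nonempty hE hcs hcg (hYT.trans hT) hne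
    refine ⟨x, hx1, fun h => hx2 ?_⟩
    rw [closureOp_trace hcs hT (diff_subset.trans hYT)] at h
    exact h.2
  · ext ⟨X, e⟩
    simp only [mem_setOf_eq, IsRootedCircuit]
    constructor
    · rintro ⟨hXT, heT, heX, hec, hmin⟩
      rw [closureOp_trace hcs hT hXT] at hec
      refine ⟨⟨hXT.trans hT, hT heT, heX, hec.2, ?_⟩, hXT, heT⟩
      intro Y hYX heY
      exact hmin Y hYX (by
        rw [closureOp_trace hcs hT (hYX.trans hXT)]; exact ⟨heT, heY⟩)
    · rintro ⟨⟨hXE, heE, heX, hec, hmin⟩, hXT, heT⟩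
      refine ⟨hXT, heT, heX, ?_, ?_⟩
      · rw [closureOp_trace hcs hT hXT]; exact ⟨heT, hec⟩
      · intro Y hYX heY
        rw [closureOp_trace hcs hT (hYX.trans hXT)] at heY
        exact hmin Y hYX heY.2
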